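/- Let D = ⋃_{i ∈ I} E_i be a union of open sets E_i ⊂ ℝⁿ, where each E_i satisfies a uniform interior cone condition with common profile (δ, α): for all i and all x ∈ ∂E_i there exists ν ∈ 𝕊^{n-1} with (y + C_α(ν^⊥)) ∩ B_δ(x) ⊆ E_i for all y ∈ Ē_i ∩ B_δ(x). Then at every point x ∈ ∂D, there exist i ∈ I and ν ∈ 𝕊^{n-1} such that (x + C_α(ν^⊥)) ∩ B_δ(x) ⊆ D. -/

import Mathlib

open scoped RealInnerProductSpace

open Filter Metric Set Topology

/-- A segment from a point of `A` to a point outside `closure A` meets `frontier A`,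
provided `A` is open. -/
lemma aux_segment_frontier {E : Type*} [NormedAddCommGroup E] [NormedSpace ℝ E]
    {A : Set E} (hA : IsOpen A) {p q : E} (hp : p ∈ A) (hq : q ∉ closure A) :
    ∃ z ∈ segment ℝ p q, z ∈ frontier A := by
  by_contra h
  push_neg at h
  have hpre : IsPreconnected (segment ℝ p q) := (convex_segment p q).isPreconnected
  have hsub : segment ℝ p q ⊆ A ∪ (closure A)ᶜ := by
    intro z hz
    rcases (Classical.em (z ∈ closure A)) with hc | hc
    · rcases (Classical.em (z ∈ A)) with h1 | h1
      · exact Or.inl h1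
      · exact absurd ⟨hc, by simpa [hA.interior_eq] using h1⟩ (h z hz)
    · exact Or.inr hc
  have := hpre A (closure A)ᶜ hA isClosed_closure.isOpen_compl hsub
    ⟨p, left_mem_segment ℝ p q, hp⟩ ⟨q, right_mem_segment ℝ p q, hq⟩
  obtain ⟨z, _, hz1, hz2⟩ := this
  exact hz2 (subset_closure hz1)

/-- Passage of the uniform interior cone condition from individual open sets
to their union (step in the proof of Theorem 1.1): if every `E_i` satisfies a
uniform interior cone condition with the common profile (δ, α), then at every
boundary point of `D = ⋃ E_i` some cone of the same profile fits inside D. -/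
theorem stmt_16 {n : ℕ} {I : Type*} (Es : I → Set (EuclideanSpace ℝ (Fin n)))
    (hopen : ∀ i, IsOpen (Es i)) (δ α : ℝ) (hδ : 0 < δ) (hα : 0 < α)
    (hprofile : ∀ i, ∀ x ∈ frontier (Es i),
      ∃ ν : EuclideanSpace ℝ (Fin n), ‖ν‖ = 1 ∧
        ∀ y ∈ closure (Es i) ∩ Metric.ball x δ, ∀ w,
          α * ‖(w - y) - ⟪w - y, ν⟫ • ν‖ < ⟪w - y, ν⟫ →
          w ∈ Metric.ball x δ → w ∈ Es i) :
    ∀ x ∈ frontier (⋃ i, Es i),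
      ∃ (_ : I) (ν : EuclideanSpace ℝ (Fin n)), ‖ν‖ = 1 ∧
        ∀ w, α * ‖(w - x) - ⟪w - x, ν⟫ • ν‖ < ⟪w - x, ν⟫ →
          w ∈ Metric.ball x δ → w ∈ ⋃ i, Es i := by
  intro x hx
  have hSopen : IsOpen (⋃ i, Es i) := isOpen_iUnion hopen
  have hxc : x ∈ closure (⋃ i, Es i) := hx.1
  have hxn : x ∉ ⋃ i, Es i := by
    intro h; exact hx.2 (by rwa [hSopen.interior_eq])
  -- the union is nonempty, pick a default index
  obtain ⟨p0, hp0⟩ : (⋃ i, Es i).Nonempty := by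
    rcases Set.eq_empty_or_nonempty (⋃ i, Es i) with h | h
    · rw [h, closure_empty] at hxc; exact absurd hxc (Set.notMem_empty x)
    · exact h
  obtain ⟨i0, _⟩ := Set.mem_iUnion.mp hp0
  by_cases hcase : ∃ i, x ∈ closure (Es i)
  · -- easy case: x is a boundary point of some E_i
    obtain ⟨i, hic⟩ := hcase
    have hxni : x ∉ Es i := fun h => hxn (Set.mem_iUnion.mpr ⟨i, h⟩)
    have hfr : x ∈ frontier (Es i) :=
      ⟨hic, by rwa [(hopen i).interior_eq]⟩
    obtain ⟨ν, hν1, hν⟩ := hprofile i x hfr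
    exact ⟨i0, ν, hν1, fun w hw hwb =>
      Set.mem_iUnion.mpr ⟨i, hν x ⟨hic, Metric.mem_ball_self hδ⟩ w hw hwb⟩⟩
  · -- hard case: x is in no closure (Es i); use compactness of the sphere
    push_neg at hcase
    have key : ∀ k : ℕ, ∃ (i : I) (z ν : EuclideanSpace ℝ (Fin n)),
        dist z x < 1 / (k + 1) ∧ ‖ν‖ = 1 ∧
        ∀ w, α * ‖(w - z) - ⟪w - z, ν⟫ • ν‖ < ⟪w - z, ν⟫ →
          w ∈ Metric.ball z δ → w ∈ Es i := by
      intro k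
      have hεpos : (0 : ℝ) < 1 / (k + 1) := by positivity
      obtain ⟨p, hpS, hpd⟩ := Metric.mem_closure_iff.mp hxc _ hεpos
      obtain ⟨i, hpi⟩ := Set.mem_iUnion.mp hpS
      obtain ⟨z, hzseg, hzfr⟩ := aux_segment_frontier (hopen i) hpi (hcase i)
      have hzball : z ∈ Metric.ball x (1 / (k + 1)) := by
        have hball : Convex ℝ (Metric.ball x (1 / (k + 1))) := convex_ball x _
        have hpb : p ∈ Metric.ball x (1 / (k + 1)) := by
          rw [Metric.mem_ball, dist_comm]; exact hpd
        exact hball.segment_subset hpb (Metric.mem_ball_self hεpos) hzseg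
      obtain ⟨ν, hν1, hν⟩ := hprofile i z hzfr
      exact ⟨i, z, ν, Metric.mem_ball.mp hzball, hν1,
        fun w hw hwb => hν z ⟨hzfr.1, Metric.mem_ball_self hδ⟩ w hw hwb⟩
    choose iseq zseq νseq hzd hν1 hcone using key
    -- zseq → x
    have hz : Tendsto zseq atTop (𝓝 x) := by
      rw [tendsto_iff_dist_tendsto_zero]
      refine squeeze_zero (fun k => dist_nonneg) (fun k => (hzd k).le) ?_
      exact tendsto_one_div_add_atTop_nhds_zero_nat
    -- νseq clusters at some unit vector ν
    have hsph : IsCompact (Metric.sphere (0 : EuclideanSpace ℝ (Fin n)) 1) :=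
      isCompact_sphere 0 1
    obtain ⟨ν, hνs, hcl⟩ : ∃ ν ∈ Metric.sphere (0 : EuclideanSpace ℝ (Fin n)) 1,
        MapClusterPt ν atTop νseq := by
      refine hsph.exists_mapClusterPt (Filter.le_principal_iff.mpr ?_)
      exact Filter.mem_map.mpr (Filter.Eventually.of_forall fun k =>
        mem_sphere_zero_iff_norm.mpr (hν1 k))
    refine ⟨i0, ν, mem_sphere_zero_iff_norm.mp hνs, fun w hw hwb => ?_⟩
    -- the cone condition is open in (base point, direction)
    have cs : Continuous fun p : EuclideanSpace ℝ (Fin n) × EuclideanSpace ℝ (Fin n) =>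
        w - p.1 := continuous_const.sub continuous_fst
    have c2 : Continuous fun p : EuclideanSpace ℝ (Fin n) × EuclideanSpace ℝ (Fin n) =>
        ⟪w - p.1, p.2⟫ := cs.inner continuous_snd
    have c1 : Continuous fun p : EuclideanSpace ℝ (Fin n) × EuclideanSpace ℝ (Fin n) =>
        α * ‖(w - p.1) - ⟪w - p.1, p.2⟫ • p.2‖ :=
      continuous_const.mul ((cs.sub (c2.smul continuous_snd)).norm)
    have c3 : Continuous fun p : EuclideanSpace ℝ (Fin n) × EuclideanSpace ℝ (Fin n) =>
        dist w p.1 := continuous_const.dist continuous_fst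
    set U : Set (EuclideanSpace ℝ (Fin n) × EuclideanSpace ℝ (Fin n)) :=
      {p | α * ‖(w - p.1) - ⟪w - p.1, p.2⟫ • p.2‖ < ⟪w - p.1, p.2⟫ ∧ dist w p.1 < δ} with hUdef
    have hUopen : IsOpen U := (isOpen_lt c1 c2).inter (isOpen_lt c3 continuous_const)
    have hxU : (x, ν) ∈ U := ⟨hw, Metric.mem_ball.mp hwb⟩
    obtain ⟨V, hV, W, hW, hVW⟩ := mem_nhds_prod_iff.mp (hUopen.mem_nhds hxU)
    have hfreq : ∃ᶠ k in atTop, νseq k ∈ W := (mapClusterPt_iff_frequently.mp hcl) W hW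
    have hev : ∀ᶠ k in atTop, zseq k ∈ V := hz hV
    obtain ⟨k, hkW, hkV⟩ := (hfreq.and_eventually hev).exists
    have hU : (zseq k, νseq k) ∈ U := hVW ⟨hkV, hkW⟩
    exact Set.mem_iUnion.mpr ⟨iseq k, hcone k w hU.1 (Metric.mem_ball.mpr hU.2)⟩
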